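/- Let ã < b̃ be real numbers and let u : ℝ → ℝ be twice continuously differentiable on the closed interval [ã, b̃]. Then |u'(ã)| ≤ (4/(b̃ − ã)) · max_{[ã,b̃]} |u| + ((b̃ − ã)/4) · max_{[ã,b̃]} |u''|. -/

import Mathlib

open Set

lemma abs_le_biSup_of_mem {f : ℝ → ℝ} {s : Set ℝ} (hs : IsCompact s)
    (hne : s.Nonempty) (hf : ContinuousOn f s) :
    ∀ y ∈ s, |f y| ≤ ⨆ x ∈ s, |f x| := by
  obtain ⟨C, hC⟩ := hs.exists_bound_of_continuousOn hf
  obtain ⟨z, hz⟩ := hne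
  have hC0 : 0 ≤ C := (abs_nonneg _).trans (hC z hz)
  intro y hy
  have hb : BddAbove (Set.range fun x => ⨆ _ : x ∈ s, |f x|) := by
    refine ⟨C, ?_⟩
    rintro _ ⟨x, rfl⟩
    dsimp only
    by_cases hx : x ∈ s
    · rw [ciSup_pos (f := fun _ => |f x|) hx]; exact hC x hx
    · haveI : IsEmpty (x ∈ s) := ⟨hx⟩
      rw [Real.iSup_of_isEmpty]; exact hC0
  calc |f y| = ⨆ _ : y ∈ s, |f y| := (ciSup_pos (f := fun _ => |f y|) hy).symm
    _ ≤ ⨆ x, ⨆ _ : x ∈ s, |f x| := le_ciSup hb y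

/-- **Endpoint derivative estimate.**
If `u` is twice continuously differentiable on `[ã, b̃]` (witnessed by functions
`u'`, `u''` which are derivatives of `u` resp. `u'` on the interval, with `u''`
continuous there), then
`|u'(ã)| ≤ (4/(b̃−ã))·max_{[ã,b̃]} |u| + ((b̃−ã)/4)·max_{[ã,b̃]} |u''|`. -/
theorem endpoint_derivative_estimate (a b : ℝ) (hab : a < b) (u u' u'' : ℝ → ℝ)
    (hu' : ∀ x ∈ Set.Icc a b, HasDerivWithinAt u (u' x) (Set.Icc a b) x)
    (hu'' : ∀ x ∈ Set.Icc a b, HasDerivWithinAt u' (u'' x) (Set.Icc a b) x)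
    (hcont : ContinuousOn u'' (Set.Icc a b)) :
    |u' a| ≤ 4 / (b - a) * (⨆ x ∈ Set.Icc a b, |u x|)
      + (b - a) / 4 * ⨆ x ∈ Set.Icc a b, |u'' x| := by
  set m : ℝ := (a + b) / 2 with hm_def
  have ham : a < m := by simp only [hm_def]; linarith
  have hmb : m ≤ b := by simp only [hm_def]; linarith
  have hsub : Icc a m ⊆ Icc a b := Icc_subset_Icc le_rfl hmb
  have hu'm : ∀ x ∈ Icc a m, HasDerivWithinAt u (u' x) (Icc a m) x :=
    fun x hx => (hu' x (hsub hx)).mono hsub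
  have hu''m : ∀ x ∈ Icc a m, HasDerivWithinAt u' (u'' x) (Icc a m) x :=
    fun x hx => (hu'' x (hsub hx)).mono hsub
  have hud : UniqueDiffOn ℝ (Icc a m) := uniqueDiffOn_Icc ham
  have hd1 : Set.EqOn (derivWithin u (Icc a m)) u' (Icc a m) :=
    fun x hx => (hu'm x hx).derivWithin (hud x hx)
  have hid1 : Set.EqOn (iteratedDerivWithin 1 u (Icc a m)) u' (Icc a m) := by
    intro x hx
    rw [iteratedDerivWithin_one]
    exact hd1 hx
  have hC1 : ContDiffOn ℝ 1 u (Icc a m) := by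
    rw [show (1 : WithTop ℕ∞) = 0 + 1 by norm_num, contDiffOn_succ_iff_derivWithin hud]
    refine ⟨fun x hx => (hu'm x hx).differentiableWithinAt, by simp, ?_⟩
    rw [contDiffOn_zero]
    have hdo : DifferentiableOn ℝ u' (Icc a m) :=
      fun x hx => (hu''m x hx).differentiableWithinAt
    exact hdo.continuousOn.congr hd1
  have hdiff : DifferentiableOn ℝ (iteratedDerivWithin 1 u (Icc a m)) (Ioo a m) := by
    have : DifferentiableOn ℝ u' (Ioo a m) :=
      fun x hx => ((hu''m x (Ioo_subset_Icc_self hx)).differentiableWithinAt).mono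
        Ioo_subset_Icc_self
    exact this.congr (fun x hx => hid1 (Ioo_subset_Icc_self hx))
  obtain ⟨x', hx', heq⟩ := taylor_mean_remainder_lagrange (n := 1) ham.ne
    (by rwa [uIcc_of_le ham.le]) (by rwa [uIcc_of_le ham.le, uIoo_of_le ham.le])
  rw [uIoo_of_le ham.le] at hx'; rw [uIcc_of_le ham.le] at heq
  have hx's : x' ∈ Icc a m := Ioo_subset_Icc_self hx'
  -- identify second iterated derivative
  have hiter2 : iteratedDerivWithin 2 u (Icc a m) x' = u'' x' := by
    rw [show (2 : ℕ) = 1 + 1 from rfl, iteratedDerivWithin_succ,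
      derivWithin_congr hid1 (hid1 hx's)]
    exact (hu''m x' hx's).derivWithin (hud x' hx's)
  -- compute the Taylor polynomial
  have htaylor : taylorWithinEval u 1 (Icc a m) a m = u a + (m - a) * u' a := by
    rw [taylor_within_apply]
    simp [Finset.sum_range_succ, iteratedDerivWithin_one,
      hd1 (left_mem_Icc.mpr ham.le)]
  rw [htaylor, hiter2] at heq
  have heq' : u m - (u a + (m - a) * u' a) = u'' x' * (m - a) ^ 2 / 2 := by
    rw [heq]; norm_num [Nat.factorial]
  set M := ⨆ x ∈ Icc a b, |u x| with hM
  set K := ⨆ x ∈ Icc a b, |u'' x| with hK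
  have hne : (Icc a b).Nonempty := nonempty_Icc.mpr hab.le
  have hucont : ContinuousOn u (Icc a b) :=
    fun x hx => ((hu' x hx).differentiableWithinAt).continuousWithinAt
  have hMu : ∀ y ∈ Icc a b, |u y| ≤ M := abs_le_biSup_of_mem isCompact_Icc hne hucont
  have hKu : ∀ y ∈ Icc a b, |u'' y| ≤ K := abs_le_biSup_of_mem isCompact_Icc hne hcont
  have hKx' : |u'' x'| ≤ K := hKu x' (hsub hx's)
  have hMm : |u m| ≤ M := hMu m (hsub (right_mem_Icc.mpr ham.le))
  have hMa : |u a| ≤ M := hMu a ⟨le_rfl, hab.le⟩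
  have habs : |u' a| * (m - a) ≤ |u m| + |u a| + |u'' x'| * ((m - a) ^ 2 / 2) := by
    have h1 : (m - a) * u' a = u m - u a - u'' x' * (m - a) ^ 2 / 2 := by linarith [heq']
    calc |u' a| * (m - a) = |(m - a) * u' a| := by
          rw [abs_mul, abs_of_pos (by linarith : (0:ℝ) < m - a), mul_comm]
      _ = |u m - u a - u'' x' * (m - a) ^ 2 / 2| := by rw [h1]
      _ ≤ |u m| + |u a| + |u'' x'| * ((m - a) ^ 2 / 2) := by
          have t1 := le_abs_self (u m); have t2 := neg_abs_le (u m)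
          have t3 := le_abs_self (u a); have t4 := neg_abs_le (u a)
          have t5 : u'' x' * ((m - a) ^ 2 / 2) ≤ |u'' x'| * ((m - a) ^ 2 / 2) :=
            mul_le_mul_of_nonneg_right (le_abs_self _) (by positivity)
          have t6 : -(|u'' x'| * ((m - a) ^ 2 / 2)) ≤ u'' x' * ((m - a) ^ 2 / 2) := by
            have := mul_le_mul_of_nonneg_right (neg_abs_le (u'' x'))
              (show (0:ℝ) ≤ (m - a) ^ 2 / 2 by positivity)
            linarith
          rw [abs_le]; constructor <;> nlinarith
  have key : |u' a| * ((b - a) / 2) ≤ 2 * M + K * ((b - a) / 2) ^ 2 / 2 := by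
    have hma : m - a = (b - a) / 2 := by simp only [hm_def]; ring
    rw [hma] at habs
    have t5 : |u'' x'| * (((b - a) / 2) ^ 2 / 2) ≤ K * (((b - a) / 2) ^ 2 / 2) :=
      mul_le_mul_of_nonneg_right hKx' (by positivity)
    nlinarith
  have hba : (0:ℝ) < b - a := by linarith
  have h1 : |u' a| * (b - a) ≤ 4 * M + (b - a) ^ 2 / 4 * K := by nlinarith
  have h2 : |u' a| ≤ (4 * M + (b - a) ^ 2 / 4 * K) / (b - a) := (le_div_iff₀ hba).mpr h1
  calc |u' a| ≤ (4 * M + (b - a) ^ 2 / 4 * K) / (b - a) := h2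
    _ = 4 / (b - a) * M + (b - a) / 4 * K := by field_simp
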